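/- Suppose a finite p-group Q acts on a finite p-group P by automorphisms, and H is a subgroup of P such that the union over g ∈ Q of the images H^g equals P. Then H = P. -/

import Mathlib

open Subgroup

private theorem aux15 (p : ℕ) (hp : p.Prime) (Q : Type*) [Group Q] [Finite Q]
    (hQ : IsPGroup p Q) :
    ∀ n : ℕ, ∀ (P : Type u) (_ : Group P) (_ : Finite P), Nat.card P = n → IsPGroup p P →
      ∀ (φ : Q →* MulAut P) (H : Subgroup P),
        (∀ x : P, ∃ g : Q, x ∈ H.map (φ g).toMonoidHom) → H = ⊤ := by
  intro n
  induction n using Nat.strong_induction_on with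
  | _ n ih =>
    intro P _ _ hcard hP φ H hcov
    rcases subsingleton_or_nontrivial P with hs | hnt
    · exact Subsingleton.elim _ _
    haveI : Fact p.Prime := ⟨hp⟩
    -- action of Q on the center of P
    have hcmem : ∀ (g : Q) (x : P), x ∈ center P → φ g x ∈ center P := by
      intro g x hx
      rw [Subgroup.mem_center_iff] at hx ⊢
      intro y
      have h1 : y * (φ g) x = (φ g) ((φ g).symm y * x) := by simp
      have h2 : (φ g) x * y = (φ g) (x * (φ g).symm y) := by simp
      rw [h1, h2, hx ((φ g).symm y)]
    letI act : MulAction Q ↥(center P) :=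
      { smul := fun g z => ⟨φ g z, hcmem g z z.2⟩
        one_smul := fun z => by
          ext; show φ 1 (z : P) = z; simp
        mul_smul := fun g h z => by
          ext; show φ (g * h) (z : P) = φ g (φ h (z : P)); simp }
    have hsmul : ∀ (g : Q) (z : ↥(center P)), ((g • z : ↥(center P)) : P) = φ g z := fun _ _ => rfl
    -- the center is a nontrivial p-group, so p divides its cardinality
    haveI hcnt : Nontrivial ↥(center P) := hP.center_nontrivial
    have hdvd : p ∣ Nat.card ↥(center P) := by
      obtain ⟨k, hk⟩ := IsPGroup.iff_card.mp (hP.to_subgroup (center P))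
      rcases k with _ | k
      · rw [pow_zero] at hk
        exact absurd hk Finite.one_lt_card.ne'
      · exact hk ▸ dvd_pow_self p (Nat.succ_ne_zero k)
    have h1fix : (1 : ↥(center P)) ∈ MulAction.fixedPoints Q ↥(center P) := by
      intro g; ext; show φ g (1 : P) = 1; simp
    obtain ⟨z, hzfix, hz1⟩ :=
      hQ.exists_fixed_point_of_prime_dvd_card_of_fixed_point ↥(center P) hdvd h1fix
    have hzfix' : ∀ g : Q, φ g (z : P) = (z : P) := by
      intro g
      have := hzfix g
      exact congrArg Subtype.val this
    have hzne : (z : P) ≠ 1 := by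
      intro h
      exact hz1 (Subtype.ext h.symm)
    -- N = cyclic subgroup generated by z; it is central, normal, φ-fixed, and inside H
    set N : Subgroup P := zpowers (z : P) with hN
    haveI hNnorm : N.Normal := by
      constructor
      intro x hx g
      rcases hx with ⟨m, rfl⟩
      have hc := Subgroup.mem_center_iff.mp ((center P).zpow_mem z.2 m) g
      have heq : g * (z : P) ^ m * g⁻¹ = (z : P) ^ m := by rw [hc]; group
      rw [heq]
      exact ⟨m, rfl⟩
    have hNfix : ∀ g : Q, N.map ((φ g).toMonoidHom) = N := by
      intro g
      rw [hN, MonoidHom.map_zpowers]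
      simp [hzfix' g]
    have hzH : (z : P) ∈ H := by
      obtain ⟨g, h, hh, hφ⟩ := hcov (z : P)
      have hφ2 : (φ g) h = (z : P) := hφ
      have hinv : (φ g⁻¹) ((φ g) h) = h := by simp
      have : h = (z : P) := by rw [← hinv, hφ2, hzfix']
      rwa [this] at hh
    have hNH : N ≤ H := zpowers_le.mpr hzH
    -- induced action on the quotient
    let φ' : Q →* MulAut (P ⧸ N) :=
      { toFun := fun g => QuotientGroup.congr N N (φ g) (hNfix g)
        map_one' := by
          ext x
          refine QuotientGroup.induction_on x ?_
          intro y
          simp [QuotientGroup.congr_mk]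
        map_mul' := by
          intro g h
          ext x
          refine QuotientGroup.induction_on x ?_
          intro y
          simp [QuotientGroup.congr_mk]
          exact (QuotientGroup.congr_mk N N (φ g) (hNfix g) ((φ h) y)).symm.trans
            (congrArg (QuotientGroup.congr N N (φ g) (hNfix g))
              (QuotientGroup.congr_mk N N (φ h) (hNfix h) y).symm) }
    have hφ'mk : ∀ (g : Q) (x : P),
        (φ' g) ((QuotientGroup.mk' N) x) = (QuotientGroup.mk' N) (φ g x) := by
      intro g x
      exact QuotientGroup.congr_mk N N (φ g) (hNfix g) x
    -- the quotient is smaller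
    have hNcard : 1 < Nat.card N := by
      have : Nontrivial N := ⟨⟨⟨(z : P), mem_zpowers _⟩, 1, by
        intro h; exact hzne (congrArg Subtype.val h)⟩⟩
      exact Finite.one_lt_card
    have hlt : Nat.card (P ⧸ N) < n := by
      have h2 : Nat.card (P ⧸ N) < Nat.card (P ⧸ N) * Nat.card N :=
        (lt_mul_iff_one_lt_right Nat.card_pos).mpr hNcard
      rwa [← Subgroup.card_eq_card_quotient_mul_card_subgroup N, hcard] at h2
    -- apply the inductive hypothesis
    have hcov' : ∀ x : P ⧸ N, ∃ g : Q, x ∈ (H.map (QuotientGroup.mk' N)).map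
        (φ' g).toMonoidHom := by
      intro x
      refine QuotientGroup.induction_on x ?_
      intro y
      obtain ⟨g, h, hh, hφ⟩ := hcov y
      have hφ2 : (φ g) h = y := hφ
      exact ⟨g, (QuotientGroup.mk' N) h, ⟨h, hh, rfl⟩, by
        show (φ' g) ((QuotientGroup.mk' N) h) = _
        rw [hφ'mk, hφ2]; rfl⟩
    have htop : H.map (QuotientGroup.mk' N) = ⊤ :=
      ih _ hlt (P ⧸ N) _ inferInstance rfl (hP.to_quotient N) φ' _ hcov'
    -- pull back
    have := congrArg (Subgroup.comap (QuotientGroup.mk' N)) htop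
    rwa [Subgroup.comap_map_eq, QuotientGroup.ker_mk', Subgroup.comap_top,
      sup_eq_left.mpr hNH] at this

/-- If a finite p-group Q acts by automorphisms on a finite p-group P, and H ≤ P is such
that the union of the images of H under Q is all of P, then H = P. -/
theorem stmt_15 (p : ℕ) (hp : p.Prime) (Q P : Type*) [Group Q] [Group P] [Finite Q]
    [Finite P] (hQ : IsPGroup p Q) (hP : IsPGroup p P) (φ : Q →* MulAut P)
    (H : Subgroup P) (hcov : ∀ x : P, ∃ g : Q, x ∈ H.map (φ g).toMonoidHom) :
    H = ⊤ := by
  exact aux15 p hp Q hQ (Nat.card P) P ‹_› ‹_› rfl hP φ H hcov
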